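/- arXiv:2010.07452 — 2 statements merged into one kernel-verified Lean document; each statement's English description precedes it below -/
import Mathlib

section
/- Let X be a Borel subset of ℝ^m, Y a finite set, U a finite set, T a transition kernel from X×U to X and Q an observation kernel from X to Y, and let η be the associated belief transition kernel. Let δ(Q) = inf_{x,x'∈X} Σ_{y∈Y} min(Q(y|x), Q(y|x')) be the Dobrushin coefficient of Q, and let δ̃(T) = inf_{u∈U} δ(T(·|·,u)) where, for a Markov kernel K from X to X, δ(K) is the infimum over x, x' ∈ X and finite measurable partitions {A_1,…,A_n} of X of Σ_{i=1}^n min(K(A_i|x), K(A_i|x')). Then for every z, z' ∈ P(X), every u ∈ U, and every sequence (f_m)_{m≥1} of measurable functions f_m : X → ℝ with ‖f_m‖_∞ ≤ 1, one has ρ_BL^ρ(η(·|z,u), η(·|z',u)) ≤ (3 − 2δ(Q))(1 − δ̃(T)) ‖z − z'‖_TV. -/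
open MeasureTheory ProbabilityTheory Filter
open scoped ENNReal NNReal

noncomputable section

/-- `‖f‖_BL ≤ c` with respect to the distance-like function `d`:
there are `a, b ≥ 0` with `a + b ≤ c` such that `f` is bounded by `a` and
`b`-Lipschitz with respect to `d`. -/
def blNormLE {S : Type*} (d : S → S → ℝ) (f : S → ℝ) (c : ℝ) : Prop :=
  ∃ a b : ℝ, 0 ≤ a ∧ 0 ≤ b ∧ a + b ≤ c ∧ (∀ x, |f x| ≤ a) ∧
    ∀ x y, |f x - f y| ≤ b * d x y

/-- Bounded-Lipschitz distance between two measures, induced by `d`. -/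
def blDist {S : Type*} [MeasurableSpace S] (d : S → S → ℝ) (μ ν : Measure S) : ℝ :=
  sSup {r | ∃ f : S → ℝ, Measurable f ∧ blNormLE d f 1 ∧
    r = |∫ x, f x ∂μ - ∫ x, f x ∂ν|}

/-- Total variation distance between two measures. -/
def tvDist {S : Type*} [MeasurableSpace S] (μ ν : Measure S) : ℝ :=
  sSup {r | ∃ f : S → ℝ, Measurable f ∧ (∀ x, |f x| ≤ 1) ∧
    r = |∫ x, f x ∂μ - ∫ x, f x ∂ν|}

variable {X Y U : Type*} [MeasurableSpace X] [Fintype Y]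

/-- One-step push-forward `zT_u` of a belief `z` through the transition kernel `T`. -/
def beliefPush (T : X → U → Measure X) (z : Measure X) (u : U) : Measure X :=
  z.bind fun x => T x u

/-- Predictive probability `P(y|z,u) = ∫ Q(y|x₁) (zT_u)(dx₁)` of observing `y`. -/
def obsProb (T : X → U → Measure X) (Q : X → Y → ℝ) (z : Measure X) (u : U) (y : Y) : ℝ :=
  ∫ x, Q x y ∂(beliefPush T z u)

/-- Bayes update `F(z,u,y)` of the belief `z` after applying `u` and observing `y`. -/
def bayes (T : X → U → Measure X) (Q : X → Y → ℝ) (z : Measure X) (u : U) (y : Y) :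
    Measure X :=
  (ENNReal.ofReal (obsProb T Q z u y))⁻¹ •
    ((beliefPush T z u).withDensity fun x => ENNReal.ofReal (Q x y))

/-- Integral of a function `f` on beliefs against the belief transition kernel
`η(·|z,u) = Σ_{y : P(y|z,u) > 0} P(y|z,u) δ_{F(z,u,y)}`. -/
def etaInt (T : X → U → Measure X) (Q : X → Y → ℝ) (f : Measure X → ℝ)
    (z : Measure X) (u : U) : ℝ :=
  ∑ y : Y, if 0 < obsProb T Q z u y then obsProb T Q z u y * f (bayes T Q z u y) else 0

/-- Bounded-Lipschitz distance (with respect to a pseudometric `ρ` on beliefs)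
between `η(·|z,u)` and `η(·|z',u)`. -/
def etaBLDist (T : X → U → Measure X) (Q : X → Y → ℝ)
    (ρ : Measure X → Measure X → ℝ) (z z' : Measure X) (u : U) : ℝ :=
  sSup {r | ∃ f : Measure X → ℝ, blNormLE ρ f 1 ∧
    r = |etaInt T Q f z u - etaInt T Q f z' u|}

/-- The pseudometric `ρ(μ,ν) = Σ_{m ≥ 1} 2^{-(m+1)} |∫ f_m dμ - ∫ f_m dν|` on beliefs
induced by the sequence of test functions `fs` (with `fs k` playing the role of `f_{k+1}`). -/
def rhoSeq (fs : ℕ → X → ℝ) (μ ν : Measure X) : ℝ :=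
  ∑' k : ℕ, (2 : ℝ)⁻¹ ^ (k + 2) * |∫ x, fs k x ∂μ - ∫ x, fs k x ∂ν|

/-- Dobrushin coefficient of an observation channel `Q` into a finite set. -/
def dobrushinObs (Q : X → Y → ℝ) : ℝ :=
  ⨅ p : X × X, ∑ y : Y, min (Q p.1 y) (Q p.2 y)

/-- Dobrushin coefficient of a Markov kernel `K`, via finite measurable partitions. -/
def dobrushinKernel (K : X → Measure X) : ℝ :=
  sInf {r | ∃ (x x' : X) (n : ℕ) (A : Fin n → Set X),
    (∀ i, MeasurableSet (A i)) ∧ Pairwise (Function.onFun Disjoint A) ∧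
    (⋃ i, A i) = Set.univ ∧
    r = ∑ i, min ((K x (A i)).toReal) ((K x' (A i)).toReal)}

/-- `δ̃(T) = inf_u δ(T(·|·,u))`. -/
def dobrushinTrans (T : X → U → Measure X) : ℝ :=
  ⨅ u : U, dobrushinKernel fun x => T x u

end

section Aux

variable {X : Type*} [MeasurableSpace X]

lemma aux_integrable {μ : Measure X} [IsFiniteMeasure μ] {f : X → ℝ} {C : ℝ}
    (hm : Measurable f) (hb : ∀ x, |f x| ≤ C) : Integrable f μ :=
  (integrable_const C).mono' hm.aestronglyMeasurable (Eventually.of_forall hb)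

lemma aux_abs_integral_le {μ : Measure X} [IsProbabilityMeasure μ] {f : X → ℝ} {C : ℝ}
    (hb : ∀ x, |f x| ≤ C) : |∫ x, f x ∂μ| ≤ C := by
  have h := norm_integral_le_of_norm_le_const (μ := μ) (C := C)
    (Eventually.of_forall (fun x => by rw [Real.norm_eq_abs]; exact hb x))
  rw [Real.norm_eq_abs] at h
  simpa using h

lemma tv_nonneg (μ ν : Measure X) : 0 ≤ tvDist μ ν :=
  Real.sSup_nonneg (by rintro r ⟨f, -, -, rfl⟩; positivity)

lemma tv_bddAbove (μ ν : Measure X) [IsProbabilityMeasure μ] [IsProbabilityMeasure ν] :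
    BddAbove {r | ∃ f : X → ℝ, Measurable f ∧ (∀ x, |f x| ≤ 1) ∧
      r = |∫ x, f x ∂μ - ∫ x, f x ∂ν|} := by
  refine ⟨2, ?_⟩
  rintro r ⟨f, hm, hb, rfl⟩
  have h1 : |∫ x, f x ∂μ| ≤ 1 := aux_abs_integral_le hb
  have h2 : |∫ x, f x ∂ν| ≤ 1 := aux_abs_integral_le hb
  calc |∫ x, f x ∂μ - ∫ x, f x ∂ν| ≤ |∫ x, f x ∂μ| + |∫ x, f x ∂ν| := abs_sub _ _
    _ ≤ 2 := by linarith

lemma tv_le {μ ν : Measure X} [IsProbabilityMeasure μ] [IsProbabilityMeasure ν]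
    {f : X → ℝ} (hm : Measurable f) (hb : ∀ x, |f x| ≤ 1) :
    |∫ x, f x ∂μ - ∫ x, f x ∂ν| ≤ tvDist μ ν :=
  le_csSup (tv_bddAbove μ ν) ⟨f, hm, hb, rfl⟩

lemma aux_integral_mono_measure {α β : Measure X} [IsFiniteMeasure α] [IsFiniteMeasure β]
    (h : β ≤ α) {f : X → ℝ} (hm : Measurable f) (hb : ∀ x, |f x| ≤ 1) :
    ∫ x, f x ∂α - ∫ x, f x ∂β ≤ (α Set.univ).toReal - (β Set.univ).toReal := by
  haveI : IsFiniteMeasure (α - β) := isFiniteMeasure_of_le α Measure.sub_le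
  have h1 : ∫ x, f x ∂α = ∫ x, f x ∂(α - β) + ∫ x, f x ∂β := by
    conv_lhs => rw [← Measure.sub_add_cancel_of_le h]
    exact integral_add_measure (aux_integrable hm hb) (aux_integrable hm hb)
  have h2 : ∫ x, f x ∂(α - β) ≤ ((α - β) Set.univ).toReal := by
    have := norm_integral_le_of_norm_le_const (μ := α - β) (C := 1)
      (Eventually.of_forall (fun x => by rw [Real.norm_eq_abs]; exact hb x))
    rw [one_mul] at this
    exact (le_abs_self _).trans (by simpa [Measure.real] using this)
  have h3 : ((α - β) Set.univ).toReal = (α Set.univ).toReal - (β Set.univ).toReal := by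
    rw [Measure.sub_apply MeasurableSet.univ h,
      ENNReal.toReal_sub_of_le (h Set.univ) (measure_ne_top α _)]
  linarith

end Aux

section Aux2
variable {X : Type*} [MeasurableSpace X]

lemma dobrushinKernel_nonneg (K : X → Measure X) : 0 ≤ dobrushinKernel K := by
  apply Real.sInf_nonneg
  rintro r ⟨x, x', n, A, -, -, -, rfl⟩
  exact Finset.sum_nonneg fun i _ => le_min ENNReal.toReal_nonneg ENNReal.toReal_nonneg

lemma dobrushinKernel_bddBelow (K : X → Measure X) :
    BddBelow {r | ∃ (x x' : X) (n : ℕ) (A : Fin n → Set X),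
      (∀ i, MeasurableSet (A i)) ∧ Pairwise (Function.onFun Disjoint A) ∧
      (⋃ i, A i) = Set.univ ∧
      r = ∑ i, min ((K x (A i)).toReal) ((K x' (A i)).toReal)} := by
  refine ⟨0, ?_⟩
  rintro r ⟨x, x', n, A, -, -, -, rfl⟩
  exact Finset.sum_nonneg fun i _ => le_min ENNReal.toReal_nonneg ENNReal.toReal_nonneg

lemma dobrushinKernel_le_pair (K : X → Measure X) (x x' : X) {s : Set X}
    (hs : MeasurableSet s) :
    dobrushinKernel K ≤ min ((K x s).toReal) ((K x' s).toReal)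
      + min ((K x sᶜ).toReal) ((K x' sᶜ).toReal) := by
  apply csInf_le (dobrushinKernel_bddBelow K)
  refine ⟨x, x', 2, ![s, sᶜ], ?_, ?_, ?_, ?_⟩
  · intro i; fin_cases i <;> simpa using hs.compl <;> exact hs
  · intro i j hij
    fin_cases i <;> fin_cases j <;> simp_all [Function.onFun] <;>
      [exact disjoint_compl_right; exact disjoint_compl_left]
  · ext ξ; simp [Fin.exists_fin_two, em]
  · simp [Fin.sum_univ_two]

lemma dobrushinKernel_le_one [Nonempty X] (K : X → Measure X)
    (hKp : ∀ x, IsProbabilityMeasure (K x)) : dobrushinKernel K ≤ 1 := by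
  obtain x := Classical.arbitrary X
  have h := dobrushinKernel_le_pair K x x (MeasurableSet.univ)
  haveI := hKp x
  simpa [measure_univ] using h

end Aux2

section Aux3
variable {X : Type*} [MeasurableSpace X]

lemma aux_osc {K : X → Measure X} (hKp : ∀ x, IsProbabilityMeasure (K x))
    {f : X → ℝ} (hm : Measurable f) (hb : ∀ x, |f x| ≤ 1) (x x' : X) :
    ∫ ξ, f ξ ∂(K x) - ∫ ξ, f ξ ∂(K x') ≤ 2 * (1 - dobrushinKernel K) := by
  haveI := hKp x; haveI := hKp x'
  obtain ⟨s, hs, h1, h2⟩ := hahn_decomposition (μ := K x) (ν := K x')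
  have hr1 : (K x').restrict s ≤ (K x).restrict s := by
    refine Measure.le_iff.2 fun t ht => ?_
    rw [Measure.restrict_apply ht, Measure.restrict_apply ht]
    exact h1 _ (ht.inter hs) Set.inter_subset_right
  have hr2 : (K x).restrict sᶜ ≤ (K x').restrict sᶜ := by
    refine Measure.le_iff.2 fun t ht => ?_
    rw [Measure.restrict_apply ht, Measure.restrict_apply ht]
    exact h2 _ (ht.inter hs.compl) Set.inter_subset_right
  have e1 : ∫ ξ in s, f ξ ∂(K x) + ∫ ξ in sᶜ, f ξ ∂(K x) = ∫ ξ, f ξ ∂(K x) :=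
    integral_add_compl hs (aux_integrable hm hb)
  have e2 : ∫ ξ in s, f ξ ∂(K x') + ∫ ξ in sᶜ, f ξ ∂(K x') = ∫ ξ, f ξ ∂(K x') :=
    integral_add_compl hs (aux_integrable hm hb)
  have b1 : ∫ ξ in s, f ξ ∂(K x) - ∫ ξ in s, f ξ ∂(K x')
      ≤ (K x s).toReal - (K x' s).toReal := by
    have := aux_integral_mono_measure hr1 hm hb
    simpa [Measure.restrict_apply_univ] using this
  have b2 : ∫ ξ in sᶜ, f ξ ∂(K x) - ∫ ξ in sᶜ, f ξ ∂(K x')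
      ≤ (K x' sᶜ).toReal - (K x sᶜ).toReal := by
    have := aux_integral_mono_measure hr2 (f := fun ξ => -f ξ) hm.neg
      (fun ξ => by rw [abs_neg]; exact hb ξ)
    simp only [Measure.restrict_apply_univ, integral_neg] at this
    linarith
  -- mass identities
  have hm1 : (K x s).toReal + (K x sᶜ).toReal = 1 := by
    rw [← ENNReal.toReal_add (measure_ne_top _ _) (measure_ne_top _ _),
      measure_add_measure_compl hs, measure_univ, ENNReal.toReal_one]
  have hm2 : (K x' s).toReal + (K x' sᶜ).toReal = 1 := by
    rw [← ENNReal.toReal_add (measure_ne_top _ _) (measure_ne_top _ _),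
      measure_add_measure_compl hs, measure_univ, ENNReal.toReal_one]
  have hmin1 : min ((K x s).toReal) ((K x' s).toReal) = (K x' s).toReal :=
    min_eq_right (ENNReal.toReal_le_toReal (measure_ne_top _ _) (measure_ne_top _ _) |>.2
      (h1 s hs subset_rfl))
  have hmin2 : min ((K x sᶜ).toReal) ((K x' sᶜ).toReal) = (K x sᶜ).toReal :=
    min_eq_left (ENNReal.toReal_le_toReal (measure_ne_top _ _) (measure_ne_top _ _) |>.2
      (h2 sᶜ hs.compl subset_rfl))
  have hδ := dobrushinKernel_le_pair K x x' hs
  rw [hmin1, hmin2] at hδ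
  linarith

lemma tv_bind_le [Nonempty X] {K : X → Measure X} (hK : Measurable K)
    (hKp : ∀ x, IsProbabilityMeasure (K x)) (z z' : Measure X)
    [IsProbabilityMeasure z] [IsProbabilityMeasure z'] :
    tvDist (z.bind K) (z'.bind K) ≤ (1 - dobrushinKernel K) * tvDist z z' := by
  set δ := dobrushinKernel K with hδdef
  have hδ1 : δ ≤ 1 := dobrushinKernel_le_one K hKp
  apply Real.sSup_le _ (mul_nonneg (by linarith) (tv_nonneg _ _))
  rintro r ⟨f, hm, hb, rfl⟩
  set κ : Kernel X X := ⟨K, hK⟩ with hκdef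
  haveI : IsMarkovKernel κ := ⟨fun a => hKp a⟩
  have key : ∀ (w : Measure X), IsProbabilityMeasure w →
      ∫ x, f x ∂(w.bind K) = ∫ x, ∫ ξ, f ξ ∂(K x) ∂w := by
    intro w hw
    have hbind : w.bind K = (w ⊗ₘ κ).snd := by
      ext t ht
      rw [Measure.bind_apply ht hK.aemeasurable, Measure.snd_apply ht,
        Measure.compProd_apply (measurable_snd ht)]
      rfl
    have hint : Integrable (fun p : X × X => f p.2) (w ⊗ₘ κ) := by
      refine (integrable_const 1).mono' (hm.comp measurable_snd).aestronglyMeasurable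
        (Eventually.of_forall fun p => ?_)
      rw [Real.norm_eq_abs]; exact hb p.2
    rw [hbind, Measure.snd, integral_map measurable_snd.aemeasurable hm.aestronglyMeasurable,
      Measure.integral_compProd hint]
    rfl
  set g : X → ℝ := fun x => ∫ ξ, f ξ ∂(K x) with hgdef
  have hgm : Measurable g := by
    have h : StronglyMeasurable fun p : X × X => f p.2 :=
      hm.stronglyMeasurable.comp_measurable measurable_snd
    exact (h.integral_kernel_prod_right' (κ := κ)).measurable
  have hgb : ∀ x, |g x| ≤ 1 := fun x => by
    haveI := hKp x; exact aux_abs_integral_le hb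
  have hosc : ∀ x x', g x - g x' ≤ 2 * (1 - δ) := fun x x' => aux_osc hKp hm hb x x'
  rw [key z ‹_›, key z' ‹_›]
  obtain x0 := Classical.arbitrary X
  set M := sSup (Set.range g) with hM
  set m := sInf (Set.range g) with hm'
  have hne : (Set.range g).Nonempty := ⟨g x0, ⟨x0, rfl⟩⟩
  have hbdd : BddAbove (Set.range g) := ⟨1, by rintro _ ⟨x, rfl⟩; exact (abs_le.1 (hgb x)).2⟩
  have hbddb : BddBelow (Set.range g) := ⟨-1, by rintro _ ⟨x, rfl⟩; exact (abs_le.1 (hgb x)).1⟩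
  have hmle : ∀ x, m ≤ g x := fun x => csInf_le hbddb ⟨x, rfl⟩
  have hMge : ∀ x, g x ≤ M := fun x => le_csSup hbdd ⟨x, rfl⟩
  have hMm : M - m ≤ 2 * (1 - δ) := by
    have h1 : ∀ x, g x ≤ m + 2 * (1 - δ) := by
      intro x
      have h2 : g x - 2 * (1 - δ) ≤ m :=
        le_csInf hne (by rintro _ ⟨x', rfl⟩; linarith [hosc x x'])
      linarith
    have := csSup_le hne (by rintro _ ⟨x, rfl⟩; exact h1 x)
    linarith
  set c := (M + m) / 2 with hc
  set h : X → ℝ := fun x => g x - c with hh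
  have hhb : ∀ x, |h x| ≤ 1 - δ := fun x => by
    rw [abs_le]
    constructor
    · have := hmle x; simp only [hh, hc]; linarith
    · have := hMge x; simp only [hh, hc]; linarith
  have hgint : ∀ (w : Measure X), IsProbabilityMeasure w →
      ∫ x, h x ∂w = ∫ x, g x ∂w - c := by
    intro w hw
    rw [integral_sub (aux_integrable hgm hgb) (integrable_const c), integral_const]
    simp
  have hint2 : ∫ x, g x ∂z - ∫ x, g x ∂z' = ∫ x, h x ∂z - ∫ x, h x ∂z' := by
    rw [hgint z ‹_›, hgint z' ‹_›]; ring
  rw [hint2]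
  rcases eq_or_lt_of_le hδ1 with hq | hq
  · have hz0 : ∀ x, h x = 0 := fun x =>
      abs_eq_zero.1 (le_antisymm (by have h2 := hhb x; rw [hq] at h2; simpa using h2) (abs_nonneg _))
    have : h = fun _ => 0 := funext hz0
    rw [this]
    simp [mul_nonneg (show (0:ℝ) ≤ 1 - δ by linarith) (tv_nonneg z z')]
  · set e := 1 - δ with he
    have hepos : 0 < e := by linarith
    have hrw : |∫ x, h x ∂z - ∫ x, h x ∂z'|
        = e * |∫ x, (fun ξ => h ξ / e) x ∂z - ∫ x, (fun ξ => h ξ / e) x ∂z'| := by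
      simp only [integral_div]
      rw [div_sub_div_same, abs_div, abs_of_pos hepos]
      field_simp
    rw [hrw]
    have hmem : |∫ x, (fun ξ => h ξ / e) x ∂z - ∫ x, (fun ξ => h ξ / e) x ∂z'| ≤ tvDist z z' := by
      refine tv_le ((hgm.sub measurable_const).div_const e) fun x => ?_
      rw [abs_div, abs_of_pos hepos, div_le_one hepos]
      exact hhb x
    calc e * |∫ x, (fun ξ => h ξ / e) x ∂z - ∫ x, (fun ξ => h ξ / e) x ∂z'|
        ≤ e * tvDist z z' := mul_le_mul_of_nonneg_left hmem hepos.le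
      _ = (1 - δ) * tvDist z z' := by rw [he]

end Aux3

section Aux4
variable {X : Type*} [MeasurableSpace X]

lemma bind_isProb {K : X → Measure X} (hK : Measurable K)
    (hKp : ∀ x, IsProbabilityMeasure (K x)) (z : Measure X) [IsProbabilityMeasure z] :
    IsProbabilityMeasure (z.bind K) := by
  set κ : Kernel X X := ⟨K, hK⟩ with hκdef
  haveI : IsMarkovKernel κ := ⟨fun a => hKp a⟩
  have hbind : z.bind K = (z ⊗ₘ κ).snd := by
    ext t ht
    rw [Measure.bind_apply ht hK.aemeasurable, Measure.snd_apply ht,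
      Measure.compProd_apply (measurable_snd ht)]
    rfl
  rw [hbind]
  infer_instance

lemma aux_sum_abs_le_tv {Y : Type*} [Fintype Y] (ν ν' : Measure X)
    [IsProbabilityMeasure ν] [IsProbabilityMeasure ν']
    (h : Y → X → ℝ) (hm : ∀ y, Measurable (h y)) (hbd : ∀ x, ∑ y, |h y x| ≤ 1)
    (hbd1 : ∀ y x, |h y x| ≤ 1) :
    ∑ y, |∫ x, h y x ∂ν - ∫ x, h y x ∂ν'| ≤ tvDist ν ν' := by
  classical
  set s : Y → ℝ := fun y => if 0 ≤ ∫ x, h y x ∂ν - ∫ x, h y x ∂ν' then 1 else -1 with hs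
  have habs : ∀ y, |∫ x, h y x ∂ν - ∫ x, h y x ∂ν'|
      = s y * (∫ x, h y x ∂ν - ∫ x, h y x ∂ν') := by
    intro y
    simp only [hs]
    by_cases hy : 0 ≤ ∫ x, h y x ∂ν - ∫ x, h y x ∂ν'
    · rw [if_pos hy, abs_of_nonneg hy, one_mul]
    · rw [if_neg hy, abs_of_neg (not_le.1 hy), neg_one_mul]
  have hsabs : ∀ y, |s y| = 1 := by
    intro y; simp only [hs]; split <;> simp
  set H : X → ℝ := fun x => ∑ y, s y * h y x with hH
  have hHm : Measurable H := Finset.measurable_sum _ fun y _ => (hm y).const_mul (s y)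
  have hHb : ∀ x, |H x| ≤ 1 := fun x =>
    (Finset.abs_sum_le_sum_abs _ _).trans (by
      have : ∀ y, |s y * h y x| = |h y x| := fun y => by rw [abs_mul, hsabs y, one_mul]
      rw [Finset.sum_congr rfl fun y _ => this y]
      exact hbd x)
  have hint : ∀ (w : Measure X), IsProbabilityMeasure w →
      ∫ x, H x ∂w = ∑ y, s y * ∫ x, h y x ∂w := by
    intro w hw
    rw [integral_finset_sum _ fun y _ =>
      (aux_integrable (μ := w) ((hm y).const_mul (s y))
        (fun x => by rw [abs_mul, hsabs y, one_mul]; exact hbd1 y x))]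
    exact Finset.sum_congr rfl fun y _ => integral_const_mul _ _
  calc ∑ y, |∫ x, h y x ∂ν - ∫ x, h y x ∂ν'|
      = ∑ y, s y * (∫ x, h y x ∂ν - ∫ x, h y x ∂ν') := Finset.sum_congr rfl fun y _ => habs y
    _ = ∫ x, H x ∂ν - ∫ x, H x ∂ν' := by
        rw [hint ν ‹_›, hint ν' ‹_›, ← Finset.sum_sub_distrib]
        exact Finset.sum_congr rfl fun y _ => by ring
    _ ≤ |∫ x, H x ∂ν - ∫ x, H x ∂ν'| := le_abs_self _
    _ ≤ tvDist ν ν' := tv_le hHm hHb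

lemma aux_bayes_integral {ν : Measure X} [IsProbabilityMeasure ν] {q : X → ℝ}
    (hqm : Measurable q) (hq0 : ∀ x, 0 ≤ q x)
    (g : X → ℝ) {P : ℝ} (hP : P = ∫ x, q x ∂ν) (hPpos : 0 < P) :
    ∫ x, g x ∂((ENNReal.ofReal P)⁻¹ • ν.withDensity fun x => ENNReal.ofReal (q x))
      = (∫ x, q x * g x ∂ν) / P := by
  rw [integral_smul_measure]
  have h1 : (fun x => ENNReal.ofReal (q x)) = fun x => (((q x).toNNReal : ℝ≥0) : ℝ≥0∞) := rfl
  rw [h1, integral_withDensity_eq_integral_smul hqm.real_toNNReal g]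
  have h2 : ∀ x, (q x).toNNReal • g x = q x * g x := fun x => by
    rw [NNReal.smul_def, Real.coe_toNNReal _ (hq0 x), smul_eq_mul]
  rw [integral_congr_ae (Eventually.of_forall h2)]
  rw [ENNReal.toReal_inv, ENNReal.toReal_ofReal hPpos.le, smul_eq_mul]
  ring

lemma aux_ratio {P P' I I' : ℝ} (hP : 0 < P) (hP' : 0 < P') (hI : |I| ≤ P) :
    P' * |I / P - I' / P'| ≤ |I - I'| + |P - P'| := by
  have hIP : |I / P| ≤ 1 := by rw [abs_div, abs_of_pos hP, div_le_one hP]; exact hI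
  have key : P' * (I / P - I' / P') = (I - I') + (I / P) * (P' - P) := by
    field_simp
    ring
  calc P' * |I / P - I' / P'| = |P' * (I / P - I' / P')| := by
        rw [abs_mul, abs_of_pos hP']
    _ = |(I - I') + (I / P) * (P' - P)| := by rw [key]
    _ ≤ |I - I'| + |I / P| * |P' - P| := (abs_add_le _ _).trans (by rw [abs_mul])
    _ ≤ |I - I'| + 1 * |P' - P| :=
        add_le_add (le_refl _) (mul_le_mul_of_nonneg_right hIP (abs_nonneg _))
    _ = |I - I'| + |P - P'| := by rw [one_mul, abs_sub_comm P' P]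

end Aux4

theorem statement3 {m : ℕ} (Xs : Set (EuclideanSpace ℝ (Fin m))) (hXs : MeasurableSet Xs)
    {Y U : Type*} [Fintype Y] [Fintype U]
    (T : Xs → U → MeasureTheory.Measure Xs)
    (hT_meas : ∀ u : U, Measurable fun x : Xs => T x u)
    (hT_prob : ∀ (x : Xs) (u : U), MeasureTheory.IsProbabilityMeasure (T x u))
    (Q : Xs → Y → ℝ)
    (hQ_meas : ∀ y : Y, Measurable fun x : Xs => Q x y)
    (hQ_nonneg : ∀ (x : Xs) (y : Y), 0 ≤ Q x y)
    (hQ_sum : ∀ x : Xs, ∑ y : Y, Q x y = 1)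
    (fs : ℕ → Xs → ℝ)
    (hfs_meas : ∀ k, Measurable (fs k))
    (hfs_bdd : ∀ (k : ℕ) (x : Xs), |fs k x| ≤ 1)
    (z z' : MeasureTheory.Measure Xs)
    (hz : MeasureTheory.IsProbabilityMeasure z)
    (hz' : MeasureTheory.IsProbabilityMeasure z')
    (u : U) :
    etaBLDist T Q (rhoSeq fs) z z' u ≤
      (3 - 2 * dobrushinObs Q) * (1 - dobrushinTrans T) * tvDist z z' := by
  classical
  haveI := hz; haveI := hz'
  haveI hXne : Nonempty Xs := by
    by_contra hne
    rw [not_nonempty_iff] at hne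
    have h1 := hz.measure_univ
    rw [Set.univ_eq_empty_iff.2 hne] at h1
    simp at h1
  -- kernel for action u
  have hK : Measurable fun x : Xs => T x u := hT_meas u
  have hKp : ∀ x : Xs, IsProbabilityMeasure (T x u) := fun x => hT_prob x u
  haveI hνp : IsProbabilityMeasure (beliefPush T z u) := bind_isProb hK hKp z
  haveI hν'p : IsProbabilityMeasure (beliefPush T z' u) := bind_isProb hK hKp z'
  -- Dobrushin coefficient facts
  have hδQ1 : dobrushinObs Q ≤ 1 := by
    obtain ⟨x⟩ := hXne
    refine ciInf_le_of_le ⟨0, ?_⟩ (x, x) (by simp [hQ_sum x])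
    rintro r ⟨p, rfl⟩
    exact Finset.sum_nonneg fun y _ => le_min (hQ_nonneg _ _) (hQ_nonneg _ _)
  have hδT_le : dobrushinTrans T ≤ dobrushinKernel fun x : Xs => T x u :=
    ciInf_le ⟨0, by rintro r ⟨u', rfl⟩; exact dobrushinKernel_nonneg _⟩ u
  have hδT1 : dobrushinTrans T ≤ 1 :=
    hδT_le.trans (dobrushinKernel_le_one _ hKp)
  -- step 1 : contraction of the predictor
  have htb : tvDist (beliefPush T z u) (beliefPush T z' u) ≤ (1 - dobrushinTrans T) * tvDist z z' :=
    calc tvDist (beliefPush T z u) (beliefPush T z' u)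
        ≤ (1 - dobrushinKernel fun x : Xs => T x u) * tvDist z z' := tv_bind_le hK hKp z z'
      _ ≤ (1 - dobrushinTrans T) * tvDist z z' :=
          mul_le_mul_of_nonneg_right (by linarith) (tv_nonneg _ _)
  suffices hcore : etaBLDist T Q (rhoSeq fs) z z' u ≤ tvDist (beliefPush T z u) (beliefPush T z' u) by
    have h2 : (1 - dobrushinTrans T) * tvDist z z'
        ≤ (3 - 2 * dobrushinObs Q) * ((1 - dobrushinTrans T) * tvDist z z') :=
      le_mul_of_one_le_left (mul_nonneg (by linarith) (tv_nonneg _ _)) (by linarith)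
    calc etaBLDist T Q (rhoSeq fs) z z' u
        ≤ tvDist (beliefPush T z u) (beliefPush T z' u) := hcore
      _ ≤ (1 - dobrushinTrans T) * tvDist z z' := htb
      _ ≤ (3 - 2 * dobrushinObs Q) * ((1 - dobrushinTrans T) * tvDist z z') := h2
      _ = (3 - 2 * dobrushinObs Q) * (1 - dobrushinTrans T) * tvDist z z' := by ring
  -- core estimate
  set ν := beliefPush T z u with hνdef
  set ν' := beliefPush T z' u with hν'def
  set t := tvDist ν ν' with htdef
  have ht0 : 0 ≤ t := tv_nonneg _ _
  apply Real.sSup_le _ ht0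
  rintro r ⟨f, ⟨a, b, ha0, hb0, hab, hfb, hfl⟩, rfl⟩
  set P : Y → ℝ := fun y => obsProb T Q z u y with hPdef
  set P' : Y → ℝ := fun y => obsProb T Q z' u y with hP'def
  have hPν : ∀ y, P y = ∫ x, Q x y ∂ν := fun y => rfl
  have hP'ν : ∀ y, P' y = ∫ x, Q x y ∂ν' := fun y => rfl
  have hP0 : ∀ y, 0 ≤ P y := fun y => by
    rw [hPν y]; exact integral_nonneg fun x => hQ_nonneg x y
  have hP'0 : ∀ y, 0 ≤ P' y := fun y => by
    rw [hP'ν y]; exact integral_nonneg fun x => hQ_nonneg x y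
  have hQle1 : ∀ (x : Xs) y, Q x y ≤ 1 := fun x y => by
    have h1 := Finset.single_le_sum (f := fun y' => Q x y') (fun i _ => hQ_nonneg x i)
      (Finset.mem_univ y)
    rw [hQ_sum x] at h1
    exact h1
  have hQb1 : ∀ y (x : Xs), |Q x y| ≤ 1 := fun y x => by
    rw [abs_of_nonneg (hQ_nonneg x y)]; exact hQle1 x y
  have hPle1 : ∀ y, P y ≤ 1 := fun y => by
    rw [hPν y]; exact (le_abs_self _).trans (aux_abs_integral_le (hQb1 y))
  have hP'le1 : ∀ y, P' y ≤ 1 := fun y => by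
    rw [hP'ν y]; exact (le_abs_self _).trans (aux_abs_integral_le (hQb1 y))
  set I : ℕ → Y → ℝ := fun k y => ∫ x, Q x y * fs k x ∂ν with hIdef
  set I' : ℕ → Y → ℝ := fun k y => ∫ x, Q x y * fs k x ∂ν' with hI'def
  have hQfb : ∀ k y (x : Xs), |Q x y * fs k x| ≤ 1 := fun k y x => by
    rw [abs_mul]
    calc |Q x y| * |fs k x| ≤ 1 * 1 :=
          mul_le_mul (hQb1 y x) (hfs_bdd k x) (abs_nonneg _) zero_le_one
      _ = 1 := mul_one 1
  have hQfQ : ∀ k y (x : Xs), |Q x y * fs k x| ≤ Q x y := fun k y x => by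
    rw [abs_mul, abs_of_nonneg (hQ_nonneg x y)]
    calc Q x y * |fs k x| ≤ Q x y * 1 :=
          mul_le_mul_of_nonneg_left (hfs_bdd k x) (hQ_nonneg x y)
      _ = Q x y := mul_one _
  have hIleP : ∀ k y, |I k y| ≤ P y := by
    intro k y
    rw [hPν y, hIdef]
    calc |∫ x, Q x y * fs k x ∂ν| ≤ ∫ x, |Q x y * fs k x| ∂ν := by
          simpa only [Real.norm_eq_abs] using
            norm_integral_le_integral_norm (μ := ν) (fun x => Q x y * fs k x)
      _ ≤ ∫ x, Q x y ∂ν := integral_mono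
          (aux_integrable ((hQ_meas y).mul (hfs_meas k)).abs
            (fun x => by rw [abs_abs]; exact hQfb k y x))
          (aux_integrable (hQ_meas y) (hQb1 y)) (fun x => hQfQ k y x)
  have hI'leP : ∀ k y, |I' k y| ≤ P' y := by
    intro k y
    rw [hP'ν y, hI'def]
    calc |∫ x, Q x y * fs k x ∂ν'| ≤ ∫ x, |Q x y * fs k x| ∂ν' := by
          simpa only [Real.norm_eq_abs] using
            norm_integral_le_integral_norm (μ := ν') (fun x => Q x y * fs k x)
      _ ≤ ∫ x, Q x y ∂ν' := integral_mono
          (aux_integrable ((hQ_meas y).mul (hfs_meas k)).abs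
            (fun x => by rw [abs_abs]; exact hQfb k y x))
          (aux_integrable (hQ_meas y) (hQb1 y)) (fun x => hQfQ k y x)
  have hIle1 : ∀ k y, |I k y| ≤ 1 := fun k y => (hIleP k y).trans (hPle1 y)
  have hI'le1 : ∀ k y, |I' k y| ≤ 1 := fun k y => (hI'leP k y).trans (hP'le1 y)
  -- sum bounds via TV
  have hsumP : ∑ y, |P y - P' y| ≤ t := by
    have h := aux_sum_abs_le_tv ν ν' (fun y x => Q x y) (fun y => hQ_meas y)
      (fun x => by
        rw [Finset.sum_congr rfl fun y _ => abs_of_nonneg (hQ_nonneg x y)]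
        exact le_of_eq (hQ_sum x))
      (fun y x => hQb1 y x)
    exact h
  have hsumI : ∀ k, ∑ y, |I k y - I' k y| ≤ t := fun k => by
    have h := aux_sum_abs_le_tv ν ν' (fun y x => Q x y * fs k x)
      (fun y => (hQ_meas y).mul (hfs_meas k))
      (fun x => by
        calc ∑ y, |Q x y * fs k x| ≤ ∑ y, Q x y :=
              Finset.sum_le_sum fun y _ => hQfQ k y x
          _ = 1 := hQ_sum x)
      (fun y x => hQfb k y x)
    exact h
  -- weights
  set w : ℕ → ℝ := fun k => (2:ℝ)⁻¹ ^ (k + 2) with hwdef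
  have hw0 : ∀ k, 0 ≤ w k := fun k => pow_nonneg (by norm_num) _
  have hwsum : Summable w := by
    have h : w = fun k : ℕ => (2:ℝ)⁻¹ ^ k * (2:ℝ)⁻¹ ^ 2 := funext fun k => pow_add _ k 2
    rw [h]
    exact (summable_geometric_of_lt_one (by norm_num) (by norm_num)).mul_right _
  have hwtot : ∑' k, w k = 2⁻¹ := by
    rw [tsum_congr (fun k => pow_add ((2:ℝ)⁻¹) k 2), tsum_mul_right,
      tsum_geometric_of_lt_one (by norm_num) (by norm_num)]
    norm_num
  have hrho0 : ∀ μ1 μ2 : Measure Xs, 0 ≤ rhoSeq fs μ1 μ2 := fun μ1 μ2 =>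
    tsum_nonneg fun k => mul_nonneg (pow_nonneg (by norm_num) _) (abs_nonneg _)
  -- Bayes updates
  have hBz : ∀ y, 0 < P y → ∀ k, ∫ x, fs k x ∂(bayes T Q z u y) = I k y / P y := by
    intro y hy k
    exact aux_bayes_integral (hQ_meas y) (fun x => hQ_nonneg x y) (fs k) (hPν y) hy
  have hBz' : ∀ y, 0 < P' y → ∀ k, ∫ x, fs k x ∂(bayes T Q z' u y) = I' k y / P' y := by
    intro y hy k
    exact aux_bayes_integral (hQ_meas y) (fun x => hQ_nonneg x y) (fs k) (hP'ν y) hy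
  -- rho bound for active observations
  have hrhoy : ∀ y, 0 < P y → 0 < P' y →
      P' y * rhoSeq fs (bayes T Q z u y) (bayes T Q z' u y)
        ≤ ∑' k, w k * (|I k y - I' k y| + |P y - P' y|) := by
    intro y hy hy'
    have hrw : rhoSeq fs (bayes T Q z u y) (bayes T Q z' u y)
        = ∑' k, w k * |I k y / P y - I' k y / P' y| :=
      tsum_congr fun k => by rw [hBz y hy k, hBz' y hy' k]
    rw [hrw, ← tsum_mul_left]
    have hd2 : ∀ k, |I k y / P y - I' k y / P' y| ≤ 2 := fun k => by
      have h1 : |I k y / P y| ≤ 1 := by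
        rw [abs_div, abs_of_pos hy, div_le_one hy]; exact hIleP k y
      have h2 : |I' k y / P' y| ≤ 1 := by
        rw [abs_div, abs_of_pos hy', div_le_one hy']; exact hI'leP k y
      calc |I k y / P y - I' k y / P' y| ≤ |I k y / P y| + |I' k y / P' y| := abs_sub _ _
        _ ≤ 2 := by linarith
    have hsum1 : Summable fun k => P' y * (w k * |I k y / P y - I' k y / P' y|) := by
      refine Summable.of_nonneg_of_le
        (fun k => mul_nonneg (hP'0 y) (mul_nonneg (hw0 k) (abs_nonneg _)))
        (fun k => ?_) ((hwsum.mul_right 2).mul_left (P' y))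
      exact mul_le_mul_of_nonneg_left
        (mul_le_mul_of_nonneg_left (hd2 k) (hw0 k)) (hP'0 y)
    have hsum2 : Summable fun k => w k * (|I k y - I' k y| + |P y - P' y|) := by
      refine Summable.of_nonneg_of_le
        (fun k => mul_nonneg (hw0 k) (by positivity))
        (fun k => ?_) (hwsum.mul_right 4)
      refine mul_le_mul_of_nonneg_left ?_ (hw0 k)
      have h1 : |I k y - I' k y| ≤ 2 :=
        (abs_sub _ _).trans (by linarith [hIle1 k y, hI'le1 k y])
      have h2 : |P y - P' y| ≤ 2 := by
        have := abs_sub (P y) (P' y)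
        have ha1 : |P y| ≤ 1 := by rw [abs_of_nonneg (hP0 y)]; exact hPle1 y
        have ha2 : |P' y| ≤ 1 := by rw [abs_of_nonneg (hP'0 y)]; exact hP'le1 y
        linarith
      linarith
    refine Summable.tsum_le_tsum (fun k => ?_) hsum1 hsum2
    calc P' y * (w k * |I k y / P y - I' k y / P' y|)
        = w k * (P' y * |I k y / P y - I' k y / P' y|) := by ring
      _ ≤ w k * (|I k y - I' k y| + |P y - P' y|) :=
          mul_le_mul_of_nonneg_left (aux_ratio hy hy' (hIleP k y)) (hw0 k)
  -- the per-observation estimate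
  set R : Y → ℝ := fun y => if 0 < P y ∧ 0 < P' y
    then P' y * rhoSeq fs (bayes T Q z u y) (bayes T Q z' u y) else 0 with hRdef
  have hR0 : ∀ y, 0 ≤ R y := fun y => by
    rw [hRdef]; dsimp only
    split
    · exact mul_nonneg (hP'0 y) (hrho0 _ _)
    · exact le_refl 0
  have hEy : ∀ y, |(if 0 < P y then P y * f (bayes T Q z u y) else 0)
      - (if 0 < P' y then P' y * f (bayes T Q z' u y) else 0)|
      ≤ a * |P y - P' y| + b * R y := by
    intro y
    by_cases hy : 0 < P y <;> by_cases hy' : 0 < P' y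
    · rw [if_pos hy, if_pos hy', hRdef]
      dsimp only
      rw [if_pos ⟨hy, hy'⟩]
      have key : P y * f (bayes T Q z u y) - P' y * f (bayes T Q z' u y)
          = (P y - P' y) * f (bayes T Q z u y)
            + P' y * (f (bayes T Q z u y) - f (bayes T Q z' u y)) := by ring
      rw [key]
      calc |(P y - P' y) * f (bayes T Q z u y)
            + P' y * (f (bayes T Q z u y) - f (bayes T Q z' u y))|
          ≤ |(P y - P' y) * f (bayes T Q z u y)|
            + |P' y * (f (bayes T Q z u y) - f (bayes T Q z' u y))| := abs_add_le _ _
        _ = |P y - P' y| * |f (bayes T Q z u y)|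
            + P' y * |f (bayes T Q z u y) - f (bayes T Q z' u y)| := by
            rw [abs_mul, abs_mul, abs_of_nonneg (hP'0 y)]
        _ ≤ |P y - P' y| * a
            + P' y * (b * rhoSeq fs (bayes T Q z u y) (bayes T Q z' u y)) :=
            add_le_add (mul_le_mul_of_nonneg_left (hfb _) (abs_nonneg _))
              (mul_le_mul_of_nonneg_left (hfl _ _) (hP'0 y))
        _ = a * |P y - P' y|
            + b * (P' y * rhoSeq fs (bayes T Q z u y) (bayes T Q z' u y)) := by ring
    · rw [if_pos hy, if_neg hy', hRdef]
      dsimp only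
      rw [if_neg (fun hc => hy' hc.2)]
      have hP'eq : P' y = 0 := le_antisymm (not_lt.1 hy') (hP'0 y)
      rw [sub_zero, abs_mul, abs_of_pos hy, mul_zero, add_zero, hP'eq, sub_zero,
        abs_of_pos hy]
      calc P y * |f (bayes T Q z u y)| ≤ P y * a :=
            mul_le_mul_of_nonneg_left (hfb _) hy.le
        _ = a * P y := by ring
    · rw [if_neg hy, if_pos hy', hRdef]
      dsimp only
      rw [if_neg (fun hc => hy hc.1)]
      have hPeq : P y = 0 := le_antisymm (not_lt.1 hy) (hP0 y)
      rw [zero_sub, abs_neg, abs_mul, abs_of_pos hy', mul_zero, add_zero, hPeq, zero_sub,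
        abs_neg, abs_of_pos hy']
      calc P' y * |f (bayes T Q z' u y)| ≤ P' y * a :=
            mul_le_mul_of_nonneg_left (hfb _) hy'.le
        _ = a * P' y := by ring
    · rw [if_neg hy, if_neg hy', hRdef]
      dsimp only
      rw [if_neg (fun hc => hy hc.1), sub_zero, abs_zero, mul_zero, add_zero]
      positivity
  -- summing the rho contributions
  have hRsum : ∑ y, R y ≤ t := by
    have hSy : ∀ y : Y, Summable fun k => w k * (|I k y - I' k y| + |P y - P' y|) := by
      intro y
      refine Summable.of_nonneg_of_le
        (fun k => mul_nonneg (hw0 k) (by positivity))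
        (fun k => ?_) (hwsum.mul_right 4)
      refine mul_le_mul_of_nonneg_left ?_ (hw0 k)
      have h1 : |I k y - I' k y| ≤ 2 :=
        (abs_sub _ _).trans (by linarith [hIle1 k y, hI'le1 k y])
      have h2 : |P y - P' y| ≤ 2 := by
        have := abs_sub (P y) (P' y)
        have ha1 : |P y| ≤ 1 := by rw [abs_of_nonneg (hP0 y)]; exact hPle1 y
        have ha2 : |P' y| ≤ 1 := by rw [abs_of_nonneg (hP'0 y)]; exact hP'le1 y
        linarith
      linarith
    have hS : ∀ y, R y ≤ ∑' k, w k * (|I k y - I' k y| + |P y - P' y|) := by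
      intro y
      rw [hRdef]; dsimp only
      split
      · next hc => exact hrhoy y hc.1 hc.2
      · exact tsum_nonneg fun k => mul_nonneg (hw0 k) (by positivity)
    have hsumL : Summable fun k => w k * (2 * t) := hwsum.mul_right _
    calc ∑ y, R y ≤ ∑ y, ∑' k, w k * (|I k y - I' k y| + |P y - P' y|) :=
          Finset.sum_le_sum fun y _ => hS y
      _ = ∑' k, ∑ y, w k * (|I k y - I' k y| + |P y - P' y|) :=
          (Summable.tsum_finsetSum (fun y _ => hSy y)).symm
      _ = ∑' k, w k * ∑ y, (|I k y - I' k y| + |P y - P' y|) :=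
          tsum_congr fun k => by rw [Finset.mul_sum]
      _ ≤ ∑' k, w k * (2 * t) := by
          refine Summable.tsum_le_tsum (fun k => mul_le_mul_of_nonneg_left ?_ (hw0 k)) ?_ hsumL
          · rw [Finset.sum_add_distrib]
            linarith [hsumI k, hsumP]
          · refine Summable.of_nonneg_of_le
              (fun k => mul_nonneg (hw0 k)
                (Finset.sum_nonneg fun y _ => by positivity))
              (fun k => mul_le_mul_of_nonneg_left ?_ (hw0 k)) hsumL
            rw [Finset.sum_add_distrib]
            linarith [hsumI k, hsumP]
      _ = (∑' k, w k) * (2 * t) := tsum_mul_right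
      _ = t := by rw [hwtot]; ring
  -- assembling
  have h1 : etaInt T Q f z u = ∑ y, (if 0 < P y then P y * f (bayes T Q z u y) else 0) := rfl
  have h2 : etaInt T Q f z' u = ∑ y, (if 0 < P' y then P' y * f (bayes T Q z' u y) else 0) := rfl
  calc |etaInt T Q f z u - etaInt T Q f z' u|
      = |∑ y, ((if 0 < P y then P y * f (bayes T Q z u y) else 0)
        - (if 0 < P' y then P' y * f (bayes T Q z' u y) else 0))| := by
        rw [h1, h2, ← Finset.sum_sub_distrib]
    _ ≤ ∑ y, |(if 0 < P y then P y * f (bayes T Q z u y) else 0)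
        - (if 0 < P' y then P' y * f (bayes T Q z' u y) else 0)| :=
        Finset.abs_sum_le_sum_abs _ _
    _ ≤ ∑ y, (a * |P y - P' y| + b * R y) := Finset.sum_le_sum fun y _ => hEy y
    _ = a * ∑ y, |P y - P' y| + b * ∑ y, R y := by
        rw [Finset.sum_add_distrib, Finset.mul_sum, Finset.mul_sum]
    _ ≤ a * t + b * t := add_le_add (mul_le_mul_of_nonneg_left hsumP ha0)
        (mul_le_mul_of_nonneg_left hRsum hb0)
    _ ≤ t := by nlinarith
end

section
/- Let X be a Borel subset of ℝ^m, Y a finite set, U a finite set, T a transition kernel from X×U to X and Q an observation kernel from X to Y. Assume that for some α_X < ∞ one has ‖T(·|x,u) − T(·|x',u)‖_TV ≤ α_X |x − x'| for all x, x' ∈ X and all u ∈ U. Then for every z, z' ∈ P(X) and every u ∈ U, the predictive observation distributions satisfy ‖P(·|z,u) − P(·|z',u)‖_TV ≤ (1 + α_X) ρ_BL(z, z'), where ρ_BL is the bounded-Lipschitz metric on P(X) induced by the Euclidean metric on X. -/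
open MeasureTheory

/-- Total variation distance between the predictive observation distributions
`P(·|z,u)` and `P(·|z',u)` on the finite observation set `Y`. -/
noncomputable def obsTVDist {X Y U : Type*} [MeasurableSpace X] [Fintype Y]
    (T : X → U → MeasureTheory.Measure X) (Q : X → Y → ℝ)
    (z z' : MeasureTheory.Measure X) (u : U) : ℝ :=
  sSup {r | ∃ f : Y → ℝ, (∀ y, |f y| ≤ 1) ∧
    r = |∑ y : Y, f y * obsProb T Q z u y - ∑ y : Y, f y * obsProb T Q z' u y|}


/-- Bounded measurable functions are integrable against finite measures. -/
lemma integrable_of_bdd {X : Type*} [MeasurableSpace X] {μ : Measure X}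
    [IsFiniteMeasure μ] {g : X → ℝ} (hg : Measurable g) {C : ℝ}
    (hb : ∀ x, |g x| ≤ C) : Integrable g μ :=
  ⟨hg.aestronglyMeasurable, HasFiniteIntegral.of_bounded (C := C) (ae_of_all _ hb)⟩

/-- Measurability of `x ↦ ∫ g dκ(x)` for nonnegative measurable `g`. -/
lemma measurable_integral_kernel {X : Type*} [MeasurableSpace X]
    {κ : X → Measure X} (hκ : Measurable κ) {g : X → ℝ} (hg : Measurable g)
    (h0 : ∀ x, 0 ≤ g x) : Measurable fun x => ∫ y, g y ∂(κ x) := by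
  have : ∀ x, ∫ y, g y ∂(κ x) = (∫⁻ y, ENNReal.ofReal (g y) ∂(κ x)).toReal := by
    intro x
    rw [integral_eq_lintegral_of_nonneg_ae (ae_of_all _ h0) hg.aestronglyMeasurable]
  simp_rw [this]
  exact (Measure.measurable_lintegral (hg.ennreal_ofReal)).comp hκ |>.ennreal_toReal

/-- Fubini-type identity for `Measure.bind` and nonnegative bounded functions. -/
lemma integral_bind_nonneg {X : Type*} [MeasurableSpace X] {μ : Measure X}
    [IsProbabilityMeasure μ] {κ : X → Measure X} (hκ : Measurable κ)
    (hκp : ∀ x, IsProbabilityMeasure (κ x)) {g : X → ℝ} (hg : Measurable g)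
    (h0 : ∀ x, 0 ≤ g x) (h1 : ∀ x, g x ≤ 1) :
    ∫ x, g x ∂(μ.bind κ) = ∫ x, (∫ y, g y ∂(κ x)) ∂μ := by
  have hib : ∀ x, Integrable g (κ x) := fun x =>
    integrable_of_bdd hg (C := 1) (fun y => abs_le.2 ⟨by linarith [h0 y], h1 y⟩)
  have h1' : ∀ x, (0:ℝ) ≤ ∫ y, g y ∂(κ x) := fun x => integral_nonneg h0
  have hmeas_inner := measurable_integral_kernel hκ hg h0
  rw [integral_eq_lintegral_of_nonneg_ae (ae_of_all _ h0) hg.aestronglyMeasurable,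
    Measure.lintegral_bind hκ.aemeasurable hg.ennreal_ofReal.aemeasurable,
    integral_eq_lintegral_of_nonneg_ae (ae_of_all _ h1') hmeas_inner.aestronglyMeasurable]
  congr 1
  refine lintegral_congr fun x => ?_
  rw [← ofReal_integral_eq_lintegral_ofReal (hib x) (ae_of_all _ h0)]


lemma norm_integral_le_one {X : Type*} [MeasurableSpace X] (μ : Measure X)
    [IsProbabilityMeasure μ] {f : X → ℝ} (hb : ∀ x, |f x| ≤ 1) :
    |∫ x, f x ∂μ| ≤ 1 := by
  have := norm_integral_le_of_norm_le_const (μ := μ) (f := f) (C := 1)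
    (ae_of_all _ fun x => by simpa [Real.norm_eq_abs] using hb x)
  simpa [Real.norm_eq_abs] using this

lemma tvDist_bddAbove {X : Type*} [MeasurableSpace X] {μ ν : Measure X}
    [IsProbabilityMeasure μ] [IsProbabilityMeasure ν] :
    BddAbove {r | ∃ f : X → ℝ, Measurable f ∧ (∀ x, |f x| ≤ 1) ∧
      r = |∫ x, f x ∂μ - ∫ x, f x ∂ν|} := by
  refine ⟨2, fun r hr => ?_⟩
  obtain ⟨f, hf, hb, rfl⟩ := hr
  have h1 := norm_integral_le_one μ hb
  have h2 := norm_integral_le_one ν hb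
  calc |∫ x, f x ∂μ - ∫ x, f x ∂ν| ≤ |∫ x, f x ∂μ| + |∫ x, f x ∂ν| := abs_sub _ _
  _ ≤ 2 := by linarith

lemma abs_integral_sub_le_tvDist {X : Type*} [MeasurableSpace X] {μ ν : Measure X}
    [IsProbabilityMeasure μ] [IsProbabilityMeasure ν] {g : X → ℝ}
    (hg : Measurable g) (hb : ∀ x, |g x| ≤ 1) :
    |∫ x, g x ∂μ - ∫ x, g x ∂ν| ≤ tvDist μ ν :=
  le_csSup tvDist_bddAbove ⟨g, hg, hb, rfl⟩

lemma blDist_bddAbove {X : Type*} [MeasurableSpace X] {d : X → X → ℝ} {μ ν : Measure X}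
    [IsProbabilityMeasure μ] [IsProbabilityMeasure ν] :
    BddAbove {r | ∃ f : X → ℝ, Measurable f ∧ blNormLE d f 1 ∧
      r = |∫ x, f x ∂μ - ∫ x, f x ∂ν|} := by
  refine ⟨2, fun r hr => ?_⟩
  obtain ⟨f, hf, ⟨a, b, ha, hbn, hab, hfa, _⟩, rfl⟩ := hr
  have hb1 : ∀ x, |f x| ≤ 1 := fun x => (hfa x).trans (by linarith)
  have h1 := norm_integral_le_one μ hb1
  have h2 := norm_integral_le_one ν hb1
  calc |∫ x, f x ∂μ - ∫ x, f x ∂ν| ≤ |∫ x, f x ∂μ| + |∫ x, f x ∂ν| := abs_sub _ _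
  _ ≤ 2 := by linarith

theorem statement4 {m : ℕ} (Xs : Set (EuclideanSpace ℝ (Fin m))) (hXs : MeasurableSet Xs)
    {Y U : Type*} [Fintype Y] [Fintype U]
    (T : Xs → U → MeasureTheory.Measure Xs)
    (hT_meas : ∀ u : U, Measurable fun x : Xs => T x u)
    (hT_prob : ∀ (x : Xs) (u : U), MeasureTheory.IsProbabilityMeasure (T x u))
    (Q : Xs → Y → ℝ)
    (hQ_meas : ∀ y : Y, Measurable fun x : Xs => Q x y)
    (hQ_nonneg : ∀ (x : Xs) (y : Y), 0 ≤ Q x y)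
    (hQ_sum : ∀ x : Xs, ∑ y : Y, Q x y = 1)
    (αX : ℝ)
    (hT_lip : ∀ (x x' : Xs) (u : U), tvDist (T x u) (T x' u) ≤ αX * dist x x')
    (z z' : MeasureTheory.Measure Xs)
    (hz : MeasureTheory.IsProbabilityMeasure z)
    (hz' : MeasureTheory.IsProbabilityMeasure z')
    (u : U) :
    obsTVDist T Q z z' u ≤ (1 + αX) * blDist (fun x x' : Xs => dist x x') z z' := by

  haveI hκp : ∀ x : Xs, IsProbabilityMeasure (T x u) := fun x => hT_prob x u
  have hκ : Measurable fun x : Xs => T x u := hT_meas u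
  have hQ1 : ∀ (x : Xs) (y : Y), Q x y ≤ 1 := by
    intro x y
    calc Q x y ≤ ∑ y' : Y, Q x y' :=
          Finset.single_le_sum (fun y' _ => hQ_nonneg x y') (Finset.mem_univ y)
    _ = 1 := hQ_sum x
  set H : Y → Xs → ℝ := fun y x => ∫ x', Q x' y ∂(T x u) with hHdef
  have hHmeas : ∀ y, Measurable (H y) := fun y =>
    measurable_integral_kernel hκ (hQ_meas y) (fun x => hQ_nonneg x y)
  have hH0 : ∀ y x, 0 ≤ H y x := fun y x => integral_nonneg (fun x' => hQ_nonneg x' y)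
  have hH1 : ∀ y x, H y x ≤ 1 := by
    intro y x
    have := norm_integral_le_one (T x u) (f := fun x' => Q x' y)
      (fun x' => abs_le.2 ⟨by linarith [hQ_nonneg x' y], hQ1 x' y⟩)
    exact (le_abs_self _).trans this
  have hobs : ∀ (w : Measure Xs), IsProbabilityMeasure w → ∀ y : Y,
      obsProb T Q w u y = ∫ x, H y x ∂w := by
    intro w hw y
    haveI := hw
    exact integral_bind_nonneg hκ hκp (hQ_meas y) (fun x => hQ_nonneg x y) (fun x => hQ1 x y)
  rcases le_or_gt 0 αX with hα | hα
  · -- main case : αX ≥ 0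
    have hc : (0:ℝ) < 1 + αX := by linarith
    refine Real.sSup_le ?_ ?_
    · rintro r ⟨f, hf, rfl⟩
      set h : Xs → ℝ := fun x => ∑ y : Y, f y * H y x with hhdef
      have hhmeas : Measurable h :=
        Finset.measurable_sum _ fun y _ => (hHmeas y).const_mul (f y)
      have hsum : ∀ (w : Measure Xs), IsProbabilityMeasure w →
          ∑ y : Y, f y * obsProb T Q w u y = ∫ x, h x ∂w := by
        intro w hw
        haveI := hw
        have h1 : ∀ y : Y, f y * obsProb T Q w u y = ∫ x, f y * H y x ∂w := by
          intro y; rw [hobs w hw y, integral_const_mul]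
        rw [Finset.sum_congr rfl (fun y _ => h1 y), ← integral_finset_sum]
        intro y _
        exact (integrable_of_bdd (hHmeas y) (C := 1)
          (fun x => abs_le.2 ⟨by linarith [hH0 y x], hH1 y x⟩)).const_mul (f y)
      have hgmeas : Measurable fun x' : Xs => ∑ y : Y, f y * Q x' y :=
        Finset.measurable_sum _ fun y _ => (hQ_meas y).const_mul (f y)
      have hgb : ∀ x' : Xs, |∑ y : Y, f y * Q x' y| ≤ 1 := by
        intro x'
        calc |∑ y : Y, f y * Q x' y| ≤ ∑ y : Y, |f y * Q x' y| :=
              Finset.abs_sum_le_sum_abs _ _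
        _ ≤ ∑ y : Y, Q x' y := Finset.sum_le_sum fun y _ => by
              rw [abs_mul, abs_of_nonneg (hQ_nonneg x' y)]
              exact mul_le_of_le_one_left (hQ_nonneg x' y) (hf y)
        _ = 1 := hQ_sum x'
      have hhx : ∀ x : Xs, h x = ∫ x', (∑ y : Y, f y * Q x' y) ∂(T x u) := by
        intro x
        rw [integral_finset_sum _ (fun y _ => (integrable_of_bdd (hQ_meas y) (C := 1)
          (fun x' => abs_le.2 ⟨by linarith [hQ_nonneg x' y], hQ1 x' y⟩)).const_mul (f y))]
        exact Finset.sum_congr rfl fun y _ => (integral_const_mul _ _).symm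
      have hhb : ∀ x, |h x| ≤ 1 := by
        intro x; rw [hhx x]; exact norm_integral_le_one (T x u) hgb
      have hhl : ∀ x x' : Xs, |h x - h x'| ≤ αX * dist x x' := by
        intro x x'
        rw [hhx x, hhx x']
        exact (abs_integral_sub_le_tvDist hgmeas hgb).trans (hT_lip x x' u)
      rw [hsum z hz, hsum z' hz']
      have hmem : ((1 + αX)⁻¹ * |∫ x, h x ∂z - ∫ x, h x ∂z'|) ∈
          {r | ∃ f : Xs → ℝ, Measurable f ∧ blNormLE (fun x x' : Xs => dist x x') f 1 ∧
            r = |∫ x, f x ∂z - ∫ x, f x ∂z'|} := by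
        refine ⟨fun x => (1 + αX)⁻¹ * h x, hhmeas.const_mul _,
          ⟨(1 + αX)⁻¹, αX * (1 + αX)⁻¹, by positivity, by positivity,
            le_of_eq (by field_simp), ?_, ?_⟩, ?_⟩
        · intro x
          rw [abs_mul, abs_of_nonneg (by positivity : (0:ℝ) ≤ (1 + αX)⁻¹)]
          calc (1 + αX)⁻¹ * |h x| ≤ (1 + αX)⁻¹ * 1 :=
                mul_le_mul_of_nonneg_left (hhb x) (by positivity)
          _ = (1 + αX)⁻¹ := mul_one _
        · intro x x'
          have : (1 + αX)⁻¹ * h x - (1 + αX)⁻¹ * h x' = (1 + αX)⁻¹ * (h x - h x') := by ring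
          rw [this, abs_mul, abs_of_nonneg (by positivity : (0:ℝ) ≤ (1 + αX)⁻¹)]
          calc (1 + αX)⁻¹ * |h x - h x'| ≤ (1 + αX)⁻¹ * (αX * dist x x') :=
                mul_le_mul_of_nonneg_left (hhl x x') (by positivity)
          _ = αX * (1 + αX)⁻¹ * dist x x' := by ring
        · rw [integral_const_mul, integral_const_mul, ← mul_sub, abs_mul,
            abs_of_nonneg (by positivity : (0:ℝ) ≤ (1 + αX)⁻¹)]
      have hle := le_csSup (blDist_bddAbove (d := fun x x' : Xs => dist x x')
        (μ := z) (ν := z')) hmem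
      rw [blDist]
      calc |∫ x, h x ∂z - ∫ x, h x ∂z'|
          = (1 + αX) * ((1 + αX)⁻¹ * |∫ x, h x ∂z - ∫ x, h x ∂z'|) := by
            field_simp
      _ ≤ (1 + αX) * _ := mul_le_mul_of_nonneg_left hle hc.le
    · have h0mem : (0:ℝ) ∈ {r | ∃ f : Xs → ℝ, Measurable f ∧
          blNormLE (fun x x' : Xs => dist x x') f 1 ∧
          r = |∫ x, f x ∂z - ∫ x, f x ∂z'|} :=
        ⟨fun _ => 0, measurable_const,
          ⟨0, 1, le_rfl, zero_le_one, by norm_num, fun x => by simp,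
            fun x y => by simpa using dist_nonneg⟩, by simp⟩
      have := le_csSup (blDist_bddAbove (d := fun x x' : Xs => dist x x')
        (μ := z) (ν := z')) h0mem
      rw [blDist]
      positivity
  · -- degenerate case : αX < 0, so Xs is a subsingleton
    have hsub : ∀ x x' : Xs, x = x' := by
      intro x x'
      by_contra hne
      have hd : 0 < dist x x' := dist_pos.2 hne
      have h1 := hT_lip x x' u
      have h2 : (0:ℝ) ≤ tvDist (T x u) (T x' u) := by
        rw [tvDist]
        exact le_csSup tvDist_bddAbove
          ⟨fun _ => 0, measurable_const, fun _ => by norm_num, by simp⟩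
      nlinarith
    have hzz : z = z' := by
      ext s hs
      rcases Set.eq_empty_or_nonempty s with rfl | ⟨x, hx⟩
      · simp
      · have hsu : s = Set.univ := Set.eq_univ_of_forall fun y => by rw [hsub y x]; exact hx
        rw [hsu, measure_univ, measure_univ]
    subst hzz
    have hbl : blDist (fun x x' : Xs => dist x x') z z = 0 := by
      rw [blDist]
      refine le_antisymm (Real.sSup_le ?_ le_rfl) ?_
      · rintro r ⟨f, _, _, rfl⟩; simp
      · exact le_csSup blDist_bddAbove
          ⟨fun _ => 0, measurable_const,
            ⟨0, 1, le_rfl, zero_le_one, by norm_num, fun x => by simp,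
              fun x y => by simpa using dist_nonneg⟩, by simp⟩
    rw [hbl, mul_zero, obsTVDist]
    refine Real.sSup_le ?_ le_rfl
    rintro r ⟨f, hf, rfl⟩
    simp
end
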